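/- If f belongs to the class 𝓕, then Re(f'(z)) ≥ 27/64 for every z ∈ ℂ with |z| ≤ 1/3. -/

import Mathlib

open Complex Metric
open scoped NNReal ENNReal

/-- The class 𝓕 of normalized locally univalent analytic functions on the unit disk
satisfying `Re (1 + z f''(z)/f'(z)) > -1/2`. -/
def IsInClassF (f : ℂ → ℂ) : Prop :=
  AnalyticOnNhd ℂ f (ball (0 : ℂ) 1) ∧ f 0 = 0 ∧ deriv f 0 = 1 ∧
    (∀ z ∈ ball (0 : ℂ) 1, deriv f z ≠ 0) ∧
    (∀ z ∈ ball (0 : ℂ) 1, (1 + z * deriv (deriv f) z / deriv f z).re > -(1/2))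

/-- The `n`-th section (partial sum) `s_n(f)(z) = z + ∑_{k=2}^n a_k z^k`, where
`a_k = f^{(k)}(0)/k!`. -/
noncomputable def sectionF (f : ℂ → ℂ) (n : ℕ) (z : ℂ) : ℂ :=
  ∑ k ∈ Finset.Icc 1 n, (iteratedDeriv k f 0 / (Nat.factorial k)) * z ^ k

/-! ### Auxiliary lemmas -/

/-- Derivative of `t ↦ normSq (W t)`. -/
lemma aux_hasDerivAt_normSq {W : ℝ → ℂ} {W' : ℂ} {θ : ℝ} (h : HasDerivAt W W' θ) :
    HasDerivAt (fun t => Complex.normSq (W t)) (2 * (W' * (starRingEnd ℂ) (W θ)).re) θ := by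
  have hc : HasDerivAt (fun t => (starRingEnd ℂ) (W t)) ((starRingEnd ℂ) W') θ := by
    simpa only [starRingEnd_apply] using h.star
  have hm := h.mul hc
  have hre := Complex.reCLM.hasFDerivAt.comp_hasDerivAt θ hm
  have hfun : (⇑Complex.reCLM ∘ (W * fun t => (starRingEnd ℂ) (W t)))
      = fun t => Complex.normSq (W t) := by
    funext t
    simp [Function.comp, Pi.mul_apply, Complex.mul_conj]
  rw [hfun] at hre
  refine hre.congr_deriv ?_
  simp only [Complex.reCLM_apply, Complex.add_re, Complex.mul_re, Complex.conj_re,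
    Complex.conj_im]
  ring

lemma aux_normSq_eq_norm_sq (w : ℂ) : Complex.normSq w = ‖w‖^2 := by
  rw [Complex.sq_norm]

/-- If a differentiable function on `ℝ` has a one-sided maximum at `1` from the left,
its derivative there is nonnegative. -/
lemma aux_deriv_nonneg_left {N : ℝ → ℝ} {d : ℝ} (h : HasDerivAt N d 1)
    (hle : ∀ t, 0 ≤ t → t ≤ 1 → N t ≤ N 1) : 0 ≤ d := by
  rw [hasDerivAt_iff_tendsto_slope] at h
  have hsub : Set.Iio (1:ℝ) ⊆ {(1:ℝ)}ᶜ := fun x hx => ne_of_lt hx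
  have h' := h.mono_left (nhdsWithin_mono 1 hsub)
  refine ge_of_tendsto h' ?_
  filter_upwards [Ioo_mem_nhdsLT_of_mem (show (1:ℝ) ∈ Set.Ioc 0 1 by norm_num)] with t ht
  rw [slope_def_field]
  have h1 : N t - N 1 ≤ 0 := sub_nonpos.2 (hle t ht.1.le ht.2.le)
  have h2 : t - 1 ≤ 0 := by linarith [ht.2]
  exact div_nonneg_iff.2 (Or.inr ⟨h1, h2⟩)

/-- Final elementary inequality: if `‖c⁻¹ - 1‖ ≤ 1/3` then `Re (c³) ≥ 27/64`. -/
lemma aux_final_ineq {c : ℂ} (hc : c ≠ 0) (h : ‖c⁻¹ - 1‖ ≤ 1/3) :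
    27/64 ≤ (c^3).re := by
  set s : ℂ := c⁻¹ with hs
  have hsne : s ≠ 0 := inv_ne_zero hc
  have hcs : c = s⁻¹ := by rw [hs, inv_inv]
  have hc3 : c^3 = (s^3)⁻¹ := by rw [hcs, ← inv_pow]
  set x := s.re with hx
  set y := s.im with hy
  have hsq : (x - 1)^2 + y^2 ≤ 1/9 := by
    have h1 : ‖s - 1‖^2 ≤ (1/3 : ℝ)^2 := by
      apply pow_le_pow_left₀ (norm_nonneg _) h
    have h2 : ‖s - 1‖^2 = (x-1)^2 + y^2 := by
      rw [Complex.sq_norm, Complex.normSq_apply]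
      simp only [Complex.sub_re, Complex.sub_im, Complex.one_re, Complex.one_im, ← hx, ← hy]
      ring
    rw [h2] at h1
    linarith
  have h3re : (s^3).re = x^3 - 3*x*y^2 := by
    simp only [pow_succ, pow_zero, one_mul, Complex.mul_re, Complex.mul_im, hx, hy]
    ring
  have hnormSq3 : Complex.normSq (s^3) = (x^2 + y^2)^3 := by
    rw [map_pow, Complex.normSq_apply, ← hx, ← hy]
    ring
  have hpos : 0 < Complex.normSq (s^3) := Complex.normSq_pos.2 (pow_ne_zero _ hsne)
  rw [hc3, Complex.inv_re, h3re, hnormSq3]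
  rw [hnormSq3] at hpos
  rw [le_div_iff₀ hpos]
  -- reduce to the polynomial inequality
  have hx23 : 2/3 ≤ x := by nlinarith [sq_nonneg y]
  have hsge : 0 ≤ 1/9 - (x-1)^2 - y^2 := by linarith
  have hposA : 0 ≤ 192*x + 27*((x^2+y^2)^2 + (x^2+y^2)*(2*x-8/9) + (2*x-8/9)^2) := by
    nlinarith [sq_nonneg (x^2+y^2+(2*x-8/9)), sq_nonneg (x^2+y^2), sq_nonneg (2*x-8/9)]
  have h1 : 0 ≤ (1/9 - (x-1)^2 - y^2) *
      (192*x + 27*((x^2+y^2)^2 + (x^2+y^2)*(2*x-8/9) + (2*x-8/9)^2)) :=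
    mul_nonneg hsge hposA
  have h2 : 0 ≤ (x-4/3)^2 * ((8:ℝ)/3) * (15*x+4) := by positivity
  nlinarith [h1, h2]

/-- Existence of a primitive of a function differentiable on the unit disk,
vanishing at the origin. -/
lemma aux_exists_primitive {F : ℂ → ℂ} (hF : DifferentiableOn ℂ F (ball (0:ℂ) 1)) :
    ∃ φ : ℂ → ℂ, φ 0 = 0 ∧ ∀ z ∈ ball (0:ℂ) 1, HasDerivAt φ (F z) z := by
  have hball : ∀ r : ℝ≥0, 0 < r → (r:ℝ) < 1 →
      HasFPowerSeriesOnBall F (cauchyPowerSeries F 0 r) 0 r := fun r h0 h1 =>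
    (hF.mono (closedBall_subset_ball h1)).hasFPowerSeriesOnBall h0
  set p := cauchyPowerSeries F 0 (1/2 : ℝ≥0) with hp
  have hhalf0 : (0:ℝ≥0) < 1/2 := by norm_num
  have hhalf1 : ((1/2 : ℝ≥0):ℝ) < 1 := by norm_num
  have hp₀ : HasFPowerSeriesOnBall F p 0 (1/2 : ℝ≥0) := hball _ hhalf0 hhalf1
  have hkey : ∀ r : ℝ≥0, 0 < r → (r:ℝ) < 1 → HasFPowerSeriesOnBall F p 0 r := by
    intro r h0 h1
    have h := hball r h0 h1
    rwa [h.hasFPowerSeriesAt.eq_formalMultilinearSeries hp₀.hasFPowerSeriesAt] at h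
  set c : ℕ → ℂ := p.coeff with hc
  refine ⟨fun w => ∑' n : ℕ, c n / ((n:ℂ)+1) * w^(n+1), ?_, ?_⟩
  · simp
  · intro z hz
    have hz1 : ‖z‖ < 1 := mem_ball_zero_iff.1 hz
    have hznn : (0:ℝ) ≤ ‖z‖ := norm_nonneg z
    set r : ℝ≥0 := ⟨(‖z‖+1)/2, by positivity⟩ with hr
    set s : ℝ≥0 := ⟨(3*‖z‖+1)/4, by positivity⟩ with hs'
    have hrR : (r:ℝ) = (‖z‖+1)/2 := rfl
    have hsR : (s:ℝ) = (3*‖z‖+1)/4 := rfl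
    have hzs : ‖z‖ < (s:ℝ) := by rw [hsR]; linarith
    have hsr : (s:ℝ) < (r:ℝ) := by rw [hsR, hrR]; linarith
    have hr1 : (r:ℝ) < 1 := by rw [hrR]; linarith
    have hr0 : (0:ℝ≥0) < r := by
      rw [← NNReal.coe_lt_coe, hrR]; positivity
    have hs0 : (0:ℝ) < (s:ℝ) := by rw [hsR]; positivity
    have hpr : HasFPowerSeriesOnBall F p 0 r := hkey r hr0 hr1
    have hrad : (r : ℝ≥0∞) ≤ p.radius := hpr.r_le
    have hsum_u : Summable (fun n => ‖c n‖ * (s:ℝ)^n) := by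
      have hlt : (s : ℝ≥0∞) < p.radius := by
        refine lt_of_lt_of_le ?_ hrad
        exact_mod_cast hsr
      have := p.summable_norm_mul_pow hlt
      simpa [hc, FormalMultilinearSeries.norm_apply_eq_norm_coef] using this
    have hder := hasDerivAt_tsum_of_isPreconnected
      (g := fun n w => c n / ((n:ℂ)+1) * w^(n+1))
      (g' := fun n y => c n * y^n)
      (u := fun n => ‖c n‖ * (s:ℝ)^n)
      (y₀ := 0) (y := z) (t := ball (0:ℂ) (s:ℝ))
      hsum_u isOpen_ball (convex_ball _ _).isPreconnected
      ?_ ?_ (mem_ball_self hs0) ?_ (mem_ball_zero_iff.2 hzs)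
    · have hmem : z ∈ Metric.eball (0:ℂ) (r : ℝ≥0∞) := by
        rw [mem_emetric_ball_zero_iff]
        have : ‖z‖ < (r:ℝ) := hzs.trans hsr
        exact_mod_cast this
      have h1 := hpr.hasSum hmem
      simp only [FormalMultilinearSeries.apply_eq_pow_smul_coeff, smul_eq_mul, zero_add] at h1
      have h2 : ∑' n : ℕ, c n * z^n = F z := by
        rw [hc]
        simpa [mul_comm] using h1.tsum_eq
      rwa [h2] at hder
    · intro n y _
      have h := (hasDerivAt_pow (n+1) y).const_mul (c n / ((n:ℂ)+1))
      simp only [Nat.add_sub_cancel, Nat.cast_add, Nat.cast_one] at h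
      refine h.congr_deriv ?_
      have hne : ((n:ℂ)+1) ≠ 0 := Nat.cast_add_one_ne_zero n
      field_simp
    · intro n y hy
      rw [norm_mul, norm_pow]
      apply mul_le_mul_of_nonneg_left _ (norm_nonneg _)
      exact pow_le_pow_left₀ (norm_nonneg y) (mem_ball_zero_iff.1 hy).le n
    · have hzf : (fun n : ℕ => c n / ((n:ℂ)+1) * (0:ℂ)^(n+1)) = fun _ => 0 := by
        funext n
        simp
      rw [hzf]
      exact summable_zero

set_option maxHeartbeats 1000000 in
/-- The key differential-subordination lemma (a Jack-lemma / Miller–Mocanu argument):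
if `g(0) = 1`, `g ≠ 0` on the disk and `Re (z g'(z)/g(z)) > -1/2` there,
then `‖1/g(z) - 1‖ < 1` on the disk. -/
lemma aux_core {g G : ℂ → ℂ}
    (hd : ∀ z ∈ ball (0:ℂ) 1, HasDerivAt g (G z) z)
    (h0 : g 0 = 1)
    (hne : ∀ z ∈ ball (0:ℂ) 1, g z ≠ 0)
    (hre : ∀ z ∈ ball (0:ℂ) 1, -(1/2:ℝ) < (z * G z / g z).re) :
    ∀ z ∈ ball (0:ℂ) 1, ‖(g z)⁻¹ - 1‖ < 1 := by
  set W : ℂ → ℂ := fun z => (g z)⁻¹ - 1 with hW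
  have hWd : ∀ z ∈ ball (0:ℂ) 1, HasDerivAt W (-(G z) / (g z)^2) z := fun z hz =>
    ((hd z hz).inv (hne z hz)).sub_const 1
  have hWdiff : DifferentiableOn ℂ W (ball (0:ℂ) 1) := fun z hz =>
    ((hWd z hz).differentiableAt).differentiableWithinAt
  have hW0 : W 0 = 0 := by simp [hW, h0]
  by_contra hcon
  push_neg at hcon
  obtain ⟨z₁, hz₁, hz₁W⟩ := hcon
  have hz₁1 : ‖z₁‖ < 1 := mem_ball_zero_iff.1 hz₁
  set K := closedBall (0:ℂ) ‖z₁‖ with hK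
  have hKsub : K ⊆ ball (0:ℂ) 1 := closedBall_subset_ball hz₁1
  have hKc : IsCompact K := isCompact_closedBall _ _
  set A := K ∩ W ⁻¹' {w : ℂ | 1 ≤ ‖w‖} with hA
  have hAcomp : IsCompact A := by
    refine hKc.of_isClosed_subset ?_ Set.inter_subset_left
    exact ContinuousOn.preimage_isClosed_of_isClosed
      ((hWdiff.mono hKsub).continuousOn) isClosed_closedBall
      (isClosed_le continuous_const continuous_norm)
  have hz₁A : z₁ ∈ A := ⟨mem_closedBall_zero_iff.2 le_rfl, hz₁W⟩
  obtain ⟨z₀, hz₀A, hz₀min⟩ := hAcomp.exists_isMinOn ⟨z₁, hz₁A⟩ continuous_norm.continuousOn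
  rw [isMinOn_iff] at hz₀min
  have hz₀K : z₀ ∈ K := hz₀A.1
  have hz₀le : ‖z₀‖ ≤ ‖z₁‖ := by
    simpa [hK, mem_closedBall, dist_zero_right] using hz₀K
  have hz₀ball : z₀ ∈ ball (0:ℂ) 1 := hKsub hz₀K
  have hz₀W : 1 ≤ ‖W z₀‖ := hz₀A.2
  have hρpos : 0 < ‖z₀‖ := by
    rcases eq_or_ne z₀ 0 with h | h
    · exfalso; rw [h, hW0] at hz₀W; exact absurd hz₀W (by norm_num)
    · exact norm_pos_iff.2 h
  -- Claim 1 : `‖W‖ ≤ 1` on the closed ball of radius `‖z₀‖`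
  have claim1 : ∀ y : ℂ, ‖y‖ ≤ ‖z₀‖ → ‖W y‖ ≤ 1 := by
    intro y hy
    by_contra hcon1
    push_neg at hcon1
    have hy0 : y ≠ 0 := by
      rintro rfl
      rw [hW0] at hcon1
      rw [norm_zero] at hcon1
      linarith
    have hypos : 0 < ‖y‖ := norm_pos_iff.2 hy0
    have hyball : y ∈ ball (0:ℂ) 1 :=
      mem_ball_zero_iff.2 (lt_of_le_of_lt (hy.trans hz₀le) hz₁1)
    have hcontW : ContinuousAt W y := (hWd y hyball).differentiableAt.continuousAt
    have hcontc : ContinuousAt (fun t : ℝ => ‖W ((t:ℂ) * y)‖) 1 := by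
      have hinner : ContinuousAt (fun t : ℝ => (t:ℂ) * y) 1 :=
        (Complex.continuous_ofReal.mul continuous_const).continuousAt
      have hWat : ContinuousAt W (((1:ℝ):ℂ) * y) := by
        rw [show (((1:ℝ):ℂ) * y) = y by simp]
        exact hcontW
      exact (ContinuousAt.comp (g := W) (f := fun t : ℝ => (t:ℂ) * y) (x := (1:ℝ)) hWat hinner).norm
    obtain ⟨δ, hδpos, hδ⟩ := Metric.continuousAt_iff.1 hcontc (‖W y‖ - 1) (by linarith)
    set t : ℝ := max (1 - δ/2) (1/2) with ht
    have ht0 : 0 < t := lt_of_lt_of_le (by norm_num) (le_max_right _ _)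
    have ht1 : t < 1 := by
      rw [ht]
      apply max_lt
      · linarith
      · norm_num
    have htd : dist t 1 < δ := by
      rw [Real.dist_eq, abs_lt]
      constructor
      · have := le_max_left (1 - δ/2) (1/2); linarith
      · linarith
    have hWt : 1 < ‖W ((t:ℂ) * y)‖ := by
      have := hδ htd
      rw [Real.dist_eq, abs_lt, show (((1:ℝ):ℂ) * y) = y by simp] at this
      linarith [this.1]
    have htyA : (t:ℂ) * y ∈ A := by
      constructor
      · rw [hK, mem_closedBall, dist_zero_right, norm_mul, Complex.norm_real,
          Real.norm_eq_abs, abs_of_pos ht0]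
        calc t * ‖y‖ ≤ 1 * ‖y‖ := by nlinarith
        _ = ‖y‖ := one_mul _
        _ ≤ ‖z₁‖ := hy.trans hz₀le
      · exact le_of_lt hWt
    have := hz₀min _ htyA
    rw [norm_mul, Complex.norm_real, Real.norm_eq_abs, abs_of_pos ht0] at this
    nlinarith
  have hWz₀ : ‖W z₀‖ = 1 := le_antisymm (claim1 z₀ le_rfl) hz₀W
  -- the function `v = dslope W 0`
  set v : ℂ → ℂ := dslope W 0 with hv
  have hvdiff : DifferentiableOn ℂ v (ball (0:ℂ) 1) :=
    (differentiableOn_dslope (ball_mem_nhds 0 one_pos)).2 hWdiff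
  have hWzv : ∀ y : ℂ, W y = y * v y := by
    intro y
    have := sub_smul_dslope W 0 y
    rw [sub_zero, hW0, sub_zero, smul_eq_mul] at this
    exact this.symm
  -- bound `‖v‖ ≤ 1/‖z₀‖` on the closed ball of radius `‖z₀‖`
  have hsubcb : closedBall (0:ℂ) ‖z₀‖ ⊆ ball (0:ℂ) 1 :=
    closedBall_subset_ball (lt_of_le_of_lt hz₀le hz₁1)
  have hvbound : ∀ y ∈ closedBall (0:ℂ) ‖z₀‖, ‖v y‖ ≤ 1/‖z₀‖ := by
    intro y hy
    refine Complex.norm_le_of_forall_mem_frontier_norm_le (U := ball (0:ℂ) ‖z₀‖) isBounded_ball ?_ ?_ ?_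
    · constructor
      · exact hvdiff.mono (ball_subset_ball (le_of_lt (lt_of_le_of_lt hz₀le hz₁1)))
      · rw [closure_ball _ hρpos.ne']
        exact (hvdiff.continuousOn).mono hsubcb
    · rw [frontier_ball _ hρpos.ne']
      intro x hx
      have hxn : ‖x‖ = ‖z₀‖ := by simpa [mem_sphere_iff_norm] using hx
      have hx0 : x ≠ 0 := by
        intro h
        rw [h, norm_zero] at hxn
        exact hρpos.ne hxn
      rw [hv, dslope_of_ne _ hx0, slope_def_field]
      rw [hW0, sub_zero, sub_zero, norm_div, hxn]
      rw [div_le_div_iff₀ hρpos hρpos, one_mul]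
      calc ‖W x‖ * ‖z₀‖ ≤ 1 * ‖z₀‖ := by
            apply mul_le_mul_of_nonneg_right (claim1 x hxn.le) hρpos.le
        _ = ‖z₀‖ := one_mul _
    · rw [closure_ball _ hρpos.ne']
      exact hy
  have hvz₀norm : ‖v z₀‖ = 1/‖z₀‖ := by
    have h1 : ‖W z₀‖ = ‖z₀‖ * ‖v z₀‖ := by rw [hWzv z₀, norm_mul]
    rw [hWz₀] at h1
    rw [eq_div_iff hρpos.ne', mul_comm]
    exact h1.symm
  have hvz₀ne : v z₀ ≠ 0 := by
    intro h
    rw [h, norm_zero] at hvz₀norm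
    have : (0:ℝ) < 1/‖z₀‖ := by positivity
    linarith [hvz₀norm ▸ this]
  have hWz₀ne : W z₀ ≠ 0 := by
    intro h
    rw [h, norm_zero] at hWz₀
    norm_num at hWz₀
  -- derivative of v at z₀
  have hvd : HasDerivAt v (deriv v z₀) z₀ :=
    (hvdiff.differentiableAt (isOpen_ball.mem_nhds hz₀ball)).hasDerivAt
  set v' : ℂ := deriv v z₀ with hv'
  set D : ℂ := v z₀ + z₀ * v' with hD
  have hWD : HasDerivAt W D z₀ := by
    have h1 : HasDerivAt (fun y : ℂ => y * v y) (1 * v z₀ + z₀ * v') z₀ :=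
      (hasDerivAt_id z₀).mul hvd
    have h2 : W = fun y : ℂ => y * v y := funext hWzv
    rw [h2]
    simpa using h1
  have huniq : D = -(G z₀) / (g z₀)^2 := hWD.unique (hWd z₀ hz₀ball)
  -- (a) angular condition: Im (z₀ D conj(W z₀)) = 0
  have hang : (z₀ * D * (starRingEnd ℂ) (W z₀)).im = 0 := by
    have hΦ : HasDerivAt (fun c : ℂ => W (Complex.exp (c * Complex.I) * z₀))
        (D * (Complex.I * z₀)) 0 := by
      have hin : HasDerivAt (fun c : ℂ => Complex.exp (c * Complex.I) * z₀)
          (Complex.I * z₀) 0 := by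
        have h1 : HasDerivAt (fun c : ℂ => c * Complex.I) Complex.I 0 := by
          simpa using (hasDerivAt_id (0:ℂ)).mul_const Complex.I
        have h2 := (h1.cexp).mul_const z₀
        simpa using h2
      have hout : HasDerivAt W D ((fun c : ℂ => Complex.exp (c * Complex.I) * z₀) 0) := by
        simpa using hWD
      exact hout.comp 0 hin
    have hΦR : HasDerivAt (fun θ : ℝ => W (Complex.exp ((θ:ℂ) * Complex.I) * z₀))
        (D * (Complex.I * z₀)) 0 := by
      have hΦ' : HasDerivAt (fun c : ℂ => W (Complex.exp (c * Complex.I) * z₀))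
          (D * (Complex.I * z₀)) (((0:ℝ):ℂ)) := by
        rw [Complex.ofReal_zero]; exact hΦ
      exact hΦ'.comp_ofReal
    have hN := aux_hasDerivAt_normSq hΦR
    have hmax : IsLocalMax (fun θ : ℝ => Complex.normSq
        (W (Complex.exp ((θ:ℂ) * Complex.I) * z₀))) 0 := by
      apply Filter.Eventually.of_forall
      intro θ
      have hnrm : ‖Complex.exp ((θ:ℂ) * Complex.I) * z₀‖ = ‖z₀‖ := by
        rw [norm_mul]
        have : ‖Complex.exp ((θ:ℂ) * Complex.I)‖ = 1 :=
          Complex.norm_exp_ofReal_mul_I θ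
        rw [this, one_mul]
      have hle : ‖W (Complex.exp ((θ:ℂ) * Complex.I) * z₀)‖ ≤ 1 :=
        claim1 _ (le_of_eq hnrm)
      have h01 : ‖W (Complex.exp (((0:ℝ):ℂ) * Complex.I) * z₀)‖ = 1 := by
        simpa using hWz₀
      simp only
      rw [aux_normSq_eq_norm_sq, aux_normSq_eq_norm_sq, h01]
      nlinarith [norm_nonneg (W (Complex.exp ((θ:ℂ) * Complex.I) * z₀))]
    have hzero := hmax.hasDerivAt_eq_zero hN
    have h0' : ((Complex.I * (z₀ * D * (starRingEnd ℂ) (W z₀)))).re = 0 := by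
      have heq : D * (Complex.I * z₀) * (starRingEnd ℂ)
          (W (Complex.exp (((0:ℝ):ℂ) * Complex.I) * z₀))
          = Complex.I * (z₀ * D * (starRingEnd ℂ) (W z₀)) := by
        have : Complex.exp (((0:ℝ):ℂ) * Complex.I) * z₀ = z₀ := by simp
        rw [this]; ring
      have := hzero
      rw [heq] at this
      linarith [this]
    have h2 := h0'
    simp only [Complex.mul_re, Complex.mul_im, Complex.I_re, Complex.I_im,
      Complex.conj_re, Complex.conj_im] at h2 ⊢
    linarith
  -- (b) radial condition: 0 ≤ Re (z₀ v' conj(v z₀))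
  have hrad : 0 ≤ (z₀ * v' * (starRingEnd ℂ) (v z₀)).re := by
    have hΨ : HasDerivAt (fun c : ℂ => v (c * z₀)) (v' * z₀) 1 := by
      have hin : HasDerivAt (fun c : ℂ => c * z₀) z₀ 1 := by
        simpa using (hasDerivAt_id (1:ℂ)).mul_const z₀
      have hout : HasDerivAt v v' ((fun c : ℂ => c * z₀) 1) := by simpa using hvd
      exact hout.comp 1 hin
    have hΨR : HasDerivAt (fun t : ℝ => v ((t:ℂ) * z₀)) (v' * z₀) 1 := by
      have hΨ' : HasDerivAt (fun c : ℂ => v (c * z₀)) (v' * z₀) (((1:ℝ):ℂ)) := by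
        rw [Complex.ofReal_one]; exact hΨ
      exact hΨ'.comp_ofReal
    have hN := aux_hasDerivAt_normSq hΨR
    have hd0 : 0 ≤ 2 * ((v' * z₀) * (starRingEnd ℂ) (v (((1:ℝ):ℂ) * z₀))).re := by
      apply aux_deriv_nonneg_left hN
      intro t ht0 ht1
      have h1 : ‖(t:ℂ) * z₀‖ ≤ ‖z₀‖ := by
        rw [norm_mul, Complex.norm_real, Real.norm_eq_abs, _root_.abs_of_nonneg ht0]
        nlinarith [norm_nonneg z₀]
      have h2 := hvbound _ (mem_closedBall_zero_iff.2 h1)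
      have h3 : ‖v (((1:ℝ):ℂ) * z₀)‖ = 1/‖z₀‖ := by
        rw [show (((1:ℝ):ℂ) * z₀) = z₀ by simp]
        exact hvz₀norm
      rw [aux_normSq_eq_norm_sq, aux_normSq_eq_norm_sq, h3]
      nlinarith [norm_nonneg (v ((t:ℂ) * z₀)), hρpos]
    have heq : (v' * z₀) * (starRingEnd ℂ) (v (((1:ℝ):ℂ) * z₀))
        = z₀ * v' * (starRingEnd ℂ) (v z₀) := by
      rw [show (((1:ℝ):ℂ) * z₀) = z₀ by simp]
      ring
    rw [heq] at hd0
    linarith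
  -- assemble k
  set k : ℂ := z₀ * D * (starRingEnd ℂ) (W z₀) with hk
  have hnsz₀ : Complex.normSq (W z₀) = 1 := by
    rw [aux_normSq_eq_norm_sq, hWz₀]; norm_num
  have hnsv : Complex.normSq z₀ * Complex.normSq (v z₀) = 1 := by
    rw [aux_normSq_eq_norm_sq, aux_normSq_eq_norm_sq, hvz₀norm, div_pow, one_pow,
      mul_one_div, div_self (pow_ne_zero 2 hρpos.ne')]
  have hkre : 1 ≤ k.re := by
    have hkeq : k = (Complex.normSq z₀ : ℂ) * (Complex.normSq (v z₀) : ℂ)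
        + (Complex.normSq z₀ : ℂ) * (z₀ * v' * (starRingEnd ℂ) (v z₀)) := by
      rw [hk, hD, hWzv z₀, map_mul, ← Complex.mul_conj, ← Complex.mul_conj]
      ring
    rw [hkeq, ← Complex.ofReal_mul, Complex.add_re, Complex.ofReal_re,
      Complex.re_ofReal_mul, hnsv]
    have h1 : 0 ≤ Complex.normSq z₀ * (z₀ * v' * (starRingEnd ℂ) (v z₀)).re :=
      mul_nonneg (Complex.normSq_nonneg _) hrad
    linarith
  have hkim : k.im = 0 := hang
  -- contradiction with the hypothesis at z₀
  have hg₀ : g z₀ ≠ 0 := hne z₀ hz₀ball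
  have hgw : g z₀ * (1 + W z₀) = 1 := by
    rw [hW]
    field_simp
    ring
  have h1W : (1:ℂ) + W z₀ ≠ 0 := by
    intro h
    rw [h, mul_zero] at hgw
    exact one_ne_zero hgw.symm
  have hG₀ : G z₀ = -(D * (g z₀)^2) := by
    rw [huniq]
    field_simp
  have hzD : z₀ * D = k * W z₀ := by
    rw [hk]
    have : (starRingEnd ℂ) (W z₀) * W z₀ = (Complex.normSq (W z₀) : ℂ) := by
      rw [mul_comm, Complex.mul_conj]
    calc z₀ * D = z₀ * D * ((starRingEnd ℂ) (W z₀) * W z₀) := by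
          rw [this, hnsz₀]; norm_num
      _ = z₀ * D * (starRingEnd ℂ) (W z₀) * W z₀ := by ring
  have hgz₀ : g z₀ = (1 + W z₀)⁻¹ := by
    have hgw2 : (1 + W z₀) * g z₀ = 1 := by rw [mul_comm]; exact hgw
    exact eq_inv_of_mul_eq_one_right hgw2
  have hginv : (g z₀)⁻¹ = 1 + W z₀ := by rw [hgz₀, inv_inv]
  have hT : z₀ * G z₀ / g z₀ = -(k * (W z₀ / (1 + W z₀))) := by
    have e1 : z₀ * G z₀ = -(k * W z₀ * (g z₀)^2) := by
      rw [hG₀]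
      linear_combination -((g z₀)^2) * hzD
    calc z₀ * G z₀ / g z₀ = -(k * W z₀ * (g z₀)^2) * (1 + W z₀) := by
          rw [div_eq_mul_inv, hginv, e1]
      _ = -(k * W z₀ * g z₀) * (g z₀ * (1 + W z₀)) := by ring
      _ = -(k * W z₀ * g z₀) := by rw [hgw, mul_one]
      _ = -(k * (W z₀ * g z₀)) := by ring
      _ = -(k * (W z₀ / (1 + W z₀))) := by rw [div_eq_mul_inv, ← hgz₀]
  have hWre : (W z₀ / (1 + W z₀)).re = 1/2 := by
    set a := (W z₀).re with ha
    set b := (W z₀).im with hb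
    have hab : a^2 + b^2 = 1 := by
      have := hnsz₀
      rw [Complex.normSq_apply] at this
      rw [ha, hb]
      linarith [this]
    have hnspos : 0 < Complex.normSq (1 + W z₀) := Complex.normSq_pos.2 h1W
    have hns : Complex.normSq (1 + W z₀) = 2 + 2*a := by
      rw [Complex.normSq_apply]
      simp only [Complex.add_re, Complex.add_im, Complex.one_re, Complex.one_im, ← ha, ← hb]
      nlinarith [hab]
    have h2a : 0 < 2 + 2*a := by rw [← hns]; exact hnspos
    rw [Complex.div_re, hns]
    simp only [Complex.add_re, Complex.add_im, Complex.one_re, Complex.one_im, ← ha, ← hb]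
    rw [← add_div, div_eq_iff (by linarith : (2:ℝ) + 2*a ≠ 0)]
    nlinarith [hab]
  have hkreal : k = ((k.re : ℝ) : ℂ) := by
    apply Complex.ext
    · simp
    · simp [hkim]
  have hTre : (z₀ * G z₀ / g z₀).re = -(k.re * (1/2)) := by
    rw [hT, hkreal]
    rw [Complex.neg_re, Complex.re_ofReal_mul, hWre]
    simp
  have := hre z₀ hz₀ball
  rw [hTre] at this
  linarith

theorem re_deriv_ge (f : ℂ → ℂ) (hf : IsInClassF f) (z : ℂ)
    (hz : ‖z‖ ≤ 1/3) :
    27/64 ≤ (deriv f z).re := by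
  obtain ⟨hA, hf0, hf'0, hne, hRe⟩ := hf
  have hzball : z ∈ ball (0:ℂ) 1 := by
    rw [mem_ball_zero_iff]
    linarith
  -- the logarithmic derivative F = f''/f'
  set F : ℂ → ℂ := fun w => deriv (deriv f) w / deriv f w with hF
  have hd1 : AnalyticOnNhd ℂ (deriv f) (ball (0:ℂ) 1) := hA.deriv
  have hd2 : AnalyticOnNhd ℂ (deriv (deriv f)) (ball (0:ℂ) 1) := hd1.deriv
  have hFanal : AnalyticOnNhd ℂ F (ball (0:ℂ) 1) := hd2.div hd1 hne
  obtain ⟨φ, hφ0, hφ⟩ := aux_exists_primitive hFanal.differentiableOn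
  -- f' = exp φ on the disk
  have hconst : ∀ w ∈ ball (0:ℂ) 1, deriv f w * Complex.exp (-φ w) = 1 := by
    have hder : ∀ w ∈ ball (0:ℂ) 1,
        HasDerivAt (fun x => deriv f x * Complex.exp (-φ x)) 0 w := by
      intro w hw
      have h1 : HasDerivAt (deriv f) (deriv (deriv f) w) w :=
        (hd1 w hw).differentiableAt.hasDerivAt
      have h2 : HasDerivAt (fun x => Complex.exp (-φ x))
          (Complex.exp (-φ w) * (-(F w))) w := ((hφ w hw).neg).cexp
      have h3 := h1.mul h2
      refine h3.congr_deriv ?_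
      rw [hF]
      have hfw : deriv f w ≠ 0 := hne w hw
      field_simp
      ring
    intro w hw
    have hball : Convex ℝ (ball (0:ℂ) 1) := convex_ball _ _
    have hzero : ∀ x ∈ ball (0:ℂ) 1,
        HasFDerivWithinAt (fun x => deriv f x * Complex.exp (-φ x))
          ((1 : ℂ →L[ℂ] ℂ).smulRight (0:ℂ)) (ball (0:ℂ) 1) x := by
      intro x hx
      exact ((hasDerivAt_iff_hasFDerivAt.1 (hder x hx)).hasFDerivWithinAt)
    have hb : ∀ x ∈ ball (0:ℂ) 1, ‖(1 : ℂ →L[ℂ] ℂ).smulRight (0:ℂ)‖ ≤ 0 := by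
      intro x _
      have : (1 : ℂ →L[ℂ] ℂ).smulRight (0:ℂ) = 0 := by
        ext y; simp
      rw [this, norm_zero]
    have hmv := hball.norm_image_sub_le_of_norm_hasFDerivWithin_le hzero hb
      (mem_ball_self one_pos) hw
    rw [zero_mul] at hmv
    have heq : deriv f w * Complex.exp (-φ w) = deriv f 0 * Complex.exp (-φ 0) := by
      have := norm_le_zero_iff.1 hmv
      linear_combination this + deriv f 0 * Complex.exp (-φ 0)
    rw [heq, hf'0, hφ0]
    simp
  have hexp : ∀ w ∈ ball (0:ℂ) 1, deriv f w = Complex.exp (φ w) := by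
    intro w hw
    have h := hconst w hw
    rw [Complex.exp_neg] at h
    field_simp at h
    exact h
  -- the cube root g = exp(φ/3)
  set g : ℂ → ℂ := fun w => Complex.exp (φ w / 3) with hgdef
  have hgd : ∀ w ∈ ball (0:ℂ) 1, HasDerivAt g (Complex.exp (φ w / 3) * (F w / 3)) w :=
    fun w hw => ((hφ w hw).div_const 3).cexp
  have hg0 : g 0 = 1 := by rw [hgdef]; simp [hφ0]
  have hgne : ∀ w ∈ ball (0:ℂ) 1, g w ≠ 0 := fun w _ => Complex.exp_ne_zero _
  have hg3 : ∀ w ∈ ball (0:ℂ) 1, (g w)^3 = deriv f w := by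
    intro w hw
    rw [hgdef, hexp w hw, ← Complex.exp_nat_mul]
    congr 1
    push_cast
    ring
  have hgre : ∀ w ∈ ball (0:ℂ) 1,
      -(1/2:ℝ) < (w * (Complex.exp (φ w / 3) * (F w / 3)) / g w).re := by
    intro w hw
    have hsimp : w * (Complex.exp (φ w / 3) * (F w / 3)) / g w = w * F w / 3 := by
      rw [hgdef]
      field_simp [Complex.exp_ne_zero]
    rw [hsimp]
    have h1 := hRe w hw
    have h2 : (1 + w * deriv (deriv f) w / deriv f w).re
        = 1 + (w * F w).re := by
      rw [Complex.add_re, Complex.one_re, hF, mul_div_assoc]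
    rw [h2] at h1
    have h3 : (w * F w / 3).re = (w * F w).re / 3 := by
      rw [show (3:ℂ) = ((3:ℝ):ℂ) by norm_num, Complex.div_ofReal_re]
    rw [h3]
    linarith
  have hcore := aux_core hgd hg0 hgne hgre
  -- Schwarz lemma for W = 1/g - 1
  set W : ℂ → ℂ := fun w => (g w)⁻¹ - 1 with hW
  have hWdiff : DifferentiableOn ℂ W (ball (0:ℂ) 1) := by
    intro w hw
    exact (((hgd w hw).inv (hgne w hw)).sub_const 1).differentiableAt.differentiableWithinAt
  have hmaps : Set.MapsTo W (ball (0:ℂ) 1) (ball (0:ℂ) 1) := by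
    intro w hw
    rw [mem_ball_zero_iff]
    exact hcore w hw
  have hW0 : W 0 = 0 := by rw [hW]; simp [hg0]
  have hschwarz := Complex.norm_le_norm_of_mapsTo_ball hWdiff (hmaps.mono_right ball_subset_closedBall) hW0
    (show ‖z‖ < 1 by linarith)
  have hWz : ‖W z‖ ≤ 1/3 := by
    calc ‖W z‖ ≤ ‖z‖ := hschwarz
      _ ≤ 1/3 := hz
  -- conclude
  have hgzne : g z ≠ 0 := hgne z hzball
  have hWzd : ‖(g z)⁻¹ - 1‖ ≤ 1/3 := hWz
  have := aux_final_ineq hgzne hWzd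
  rw [hg3 z hzball] at this
  exact this
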